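/- Let ρ > 0. Suppose x̄ ∈ X is feasible and minimizes Φ over the feasible set, with Φ* := Φ(x̄); suppose x̄_ρ ∈ X minimizes Φ_ρ := Φ + ρP over X, with Φ_ρ* := Φ_ρ(x̄_ρ); and suppose λ* ∈ ℝᵐ has nonnegative components and satisfies Φ* ≤ Φ(z) + ⟨λ*, c(z)⟩ for all z ∈ X, with Λ := ‖λ*‖. Then for every x ∈ X one has ‖[c(x)]₊‖ ≤ 2Λ/ρ + √(2(Φ_ρ(x) − Φ_ρ*)/ρ). -/
import Mathlib


open RealInnerProductSpace

/-- Feasibility bound via the quadratic penalty: under existence of a feasible minimizer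
`x̄` and Lagrange multipliers `λ* ≥ 0` with `Φ* ≤ Φ(z) + ⟨λ*, c(z)⟩` on `X`, and a
minimizer `x̄_ρ` of `Φ_ρ = Φ + ρP` over `X`, every `x ∈ X` satisfies
`‖[c(x)]₊‖ ≤ 2Λ/ρ + √(2(Φ_ρ(x) − Φ_ρ*)/ρ)` with `Λ = ‖λ*‖`. -/
theorem penalty_feasibility_bound {n m : ℕ}
    (X : Set (EuclideanSpace ℝ (Fin n))) (hXne : X.Nonempty) (hXconv : Convex ℝ X)
    (c : EuclideanSpace ℝ (Fin n) → Fin m → ℝ)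
    (Φ : EuclideanSpace ℝ (Fin n) → ℝ)
    (ρ : ℝ) (hρ : 0 < ρ)
    (xbar : EuclideanSpace ℝ (Fin n)) (hxbar_mem : xbar ∈ X)
    (hxbar_feas : ∀ i, c xbar i ≤ 0)
    (hxbar_opt : ∀ z ∈ X, (∀ i, c z i ≤ 0) → Φ xbar ≤ Φ z)
    (xρ : EuclideanSpace ℝ (Fin n)) (hxρ_mem : xρ ∈ X)
    (hxρ_opt : ∀ u ∈ X,
      Φ xρ + ρ * ((1 : ℝ) / 2 * ∑ i, max (c xρ i) 0 ^ 2) ≤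
        Φ u + ρ * ((1 : ℝ) / 2 * ∑ i, max (c u i) 0 ^ 2))
    (lam : Fin m → ℝ) (hlam_nonneg : ∀ i, 0 ≤ lam i)
    (hlag : ∀ z ∈ X, Φ xbar ≤ Φ z + ∑ i, lam i * c z i) :
    ∀ x ∈ X, Real.sqrt (∑ i, max (c x i) 0 ^ 2) ≤
      2 * Real.sqrt (∑ i, lam i ^ 2) / ρ +
      Real.sqrt (2 * ((Φ x + ρ * ((1 : ℝ) / 2 * ∑ i, max (c x i) 0 ^ 2)) -
        (Φ xρ + ρ * ((1 : ℝ) / 2 * ∑ i, max (c xρ i) 0 ^ 2))) / ρ) := by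
  intro x hx
  set S : ℝ := ∑ i, max (c x i) 0 ^ 2 with hS
  set t : ℝ := Real.sqrt S with ht
  set Λ : ℝ := Real.sqrt (∑ i, lam i ^ 2) with hΛ
  set D : ℝ := (Φ x + ρ * ((1 : ℝ) / 2 * S)) -
      (Φ xρ + ρ * ((1 : ℝ) / 2 * ∑ i, max (c xρ i) 0 ^ 2)) with hD
  have hSnn : 0 ≤ S := Finset.sum_nonneg fun i _ => sq_nonneg _
  have hDnn : 0 ≤ D := by
    have := hxρ_opt x hx; simp only [hD]; linarith
  have htnn : 0 ≤ t := Real.sqrt_nonneg _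
  have hΛnn : 0 ≤ Λ := Real.sqrt_nonneg _
  have ht2 : t ^ 2 = S := Real.sq_sqrt hSnn
  -- P(xbar) = 0
  have hPbar : (∑ i, max (c xbar i) 0 ^ 2) = 0 := by
    apply Finset.sum_eq_zero; intro i _
    have := hxbar_feas i
    have : max (c xbar i) 0 = 0 := max_eq_right this
    simp [this]
  -- Φ_ρ* ≤ Φ(xbar)
  have h1 : Φ xρ + ρ * ((1 : ℝ) / 2 * ∑ i, max (c xρ i) 0 ^ 2) ≤ Φ xbar := by
    have := hxρ_opt xbar hxbar_mem
    rw [hPbar] at this; linarith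
  -- Φ(xbar) ≤ Φ(x) + Λ t
  have hcs : (∑ i, lam i * max (c x i) 0) ≤ Λ * t := by
    exact Real.sum_mul_le_sqrt_mul_sqrt Finset.univ lam (fun i => max (c x i) 0)
  have h2 : Φ xbar ≤ Φ x + Λ * t := by
    have hl := hlag x hx
    have hmono : (∑ i, lam i * c x i) ≤ ∑ i, lam i * max (c x i) 0 := by
      apply Finset.sum_le_sum; intro i _
      exact mul_le_mul_of_nonneg_left (le_max_left _ _) (hlam_nonneg i)
    linarith
  -- combine: ρ/2 * S ≤ Λ t + D
  have hkey : ρ / 2 * t ^ 2 ≤ Λ * t + D := by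
    rw [ht2]; simp only [hD]; linarith
  set b : ℝ := Real.sqrt (2 * D / ρ) with hb
  have hbnn : 0 ≤ b := Real.sqrt_nonneg _
  have hb2 : b ^ 2 = 2 * D / ρ := Real.sq_sqrt (by positivity)
  have hρb : ρ * b ^ 2 = 2 * D := by
    rw [hb2]; field_simp
  have h3 : ρ * t ≤ 2 * Λ + ρ * b := by
    clear_value S D t Λ b
    by_contra hcon
    push_neg at hcon
    have e2 := mul_le_mul_of_nonneg_right hcon.le hbnn
    have htpos : 0 < t := by nlinarith [mul_nonneg hρ.le hbnn]
    have e1 := mul_lt_mul_of_pos_right hcon htpos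
    nlinarith [mul_nonneg hΛnn hbnn, hkey, hρb]
  rw [div_add' _ _ _ hρ.ne', le_div_iff₀ hρ]
  linarith
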